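/- Let f be a monic cubic polynomial over ℝ with three distinct real roots r₁ < r₂ < r₃. Set A₁ = diag(-1, 1, -1) and B₁ = diag(-r₁, r₂, -r₃). Then det(x·A₁ - B₁) = f(x), and the quadratic forms A₁ and B₁ have a common nonzero real zero, i.e., there is a nonzero v ∈ ℝ³ with vᵀA₁v = 0 and vᵀB₁v = 0. -/
import Mathlib


open Matrix

/-- For a monic real cubic `f` with distinct real roots `r₁ < r₂ < r₃`, the pair
`A₁ = diag(-1,1,-1)`, `B₁ = diag(-r₁,r₂,-r₃)` satisfies `det(xA₁ - B₁) = f(x)`,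
and the quadratic forms `A₁` and `B₁` have a common nonzero real zero. -/
theorem diag_pair_resolvent_and_common_zero (r₁ r₂ r₃ : ℝ) (f : ℝ → ℝ)
    (h12 : r₁ < r₂) (h23 : r₂ < r₃)
    (hf : ∀ x : ℝ, f x = (x - r₁) * (x - r₂) * (x - r₃)) :
    (∀ x : ℝ,
      Matrix.det (x • Matrix.diagonal ![(-1 : ℝ), 1, -1]
          - Matrix.diagonal ![-r₁, r₂, -r₃]) = f x) ∧
    ∃ v : Fin 3 → ℝ, v ≠ 0 ∧
      v ⬝ᵥ (Matrix.diagonal ![(-1 : ℝ), 1, -1]).mulVec v = 0 ∧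
      v ⬝ᵥ (Matrix.diagonal ![-r₁, r₂, -r₃]).mulVec v = 0 := by
  constructor
  · intro x
    rw [hf]
    simp [Matrix.det_fin_three, Matrix.diagonal]
    ring
  · refine ⟨![Real.sqrt (r₃ - r₂), Real.sqrt (r₃ - r₁), Real.sqrt (r₂ - r₁)], ?_, ?_, ?_⟩
    · intro h
      have h0 : Real.sqrt (r₃ - r₂) = 0 := congrFun h 0
      have : (0:ℝ) < r₃ - r₂ := by linarith
      have := Real.sqrt_pos.mpr this
      linarith
    · have s1 : Real.sqrt (r₃ - r₂) * Real.sqrt (r₃ - r₂) = r₃ - r₂ :=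
        Real.mul_self_sqrt (by linarith)
      have s2 : Real.sqrt (r₃ - r₁) * Real.sqrt (r₃ - r₁) = r₃ - r₁ :=
        Real.mul_self_sqrt (by linarith)
      have s3 : Real.sqrt (r₂ - r₁) * Real.sqrt (r₂ - r₁) = r₂ - r₁ :=
        Real.mul_self_sqrt (by linarith)
      simp [Matrix.mulVec, dotProduct, Fin.sum_univ_three, Matrix.diagonal]
      linear_combination -s1 + s2 - s3
    · have s1 : Real.sqrt (r₃ - r₂) * Real.sqrt (r₃ - r₂) = r₃ - r₂ :=
        Real.mul_self_sqrt (by linarith)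
      have s2 : Real.sqrt (r₃ - r₁) * Real.sqrt (r₃ - r₁) = r₃ - r₁ :=
        Real.mul_self_sqrt (by linarith)
      have s3 : Real.sqrt (r₂ - r₁) * Real.sqrt (r₂ - r₁) = r₂ - r₁ :=
        Real.mul_self_sqrt (by linarith)
      simp [Matrix.mulVec, dotProduct, Fin.sum_univ_three, Matrix.diagonal]
      linear_combination (-r₁)*s1 + r₂*s2 + (-r₃)*s3
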